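/- Let p ≥ 0 be an integer, let c > 0, and let m be a positive integer with m < 2p + 3. Let a_1, …, a_m be distinct real numbers and A_1, …, A_m real coefficients. If the function φ(x) = Σ_{j=1}^{m} A_j · K(x, a_j) has compact support, then A_j = 0 for all j = 1, …, m. In other words, there exists no kernel packet of degree lower than 2ν + 2 for the half-integer Matérn kernel with smoothness ν = p + 1/2. -/

import Mathlib

/-- The polynomial factor `P_p(u) = (p! / (2p)!) ∑_{j=0}^{p} ((p+j)! / (j! (p-j)!)) (2cu)^{p-j}`
appearing in the half-integer Matérn kernel. -/
noncomputable def maternPoly (p : ℕ) (c : ℝ) (u : ℝ) : ℝ :=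
  ((p.factorial : ℝ) / ((2 * p).factorial : ℝ)) *
    ∑ j ∈ Finset.range (p + 1),
      (((p + j).factorial : ℝ) / ((j.factorial : ℝ) * ((p - j).factorial : ℝ))) *
        (2 * c * u) ^ (p - j)

/-- The half-integer Matérn kernel with smoothness `ν = p + 1/2`:
`K(x, x') = P_p(|x - x'|) exp (-c |x - x'|)`. -/
noncomputable def maternKernel (p : ℕ) (c : ℝ) (x x' : ℝ) : ℝ :=
  maternPoly p c |x - x'| * Real.exp (-(c * |x - x'|))

open Polynomial Finset


/-- Rolle step: between consecutive zeros there are zeros of the derivative. -/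
lemma rolle_step {g : ℝ → ℝ} (hg : Differentiable ℝ g) {k : ℕ}
    (a : Fin (k+1) → ℝ) (ha : StrictMono a) (h0 : ∀ i, g (a i) = 0) :
    ∃ b : Fin k → ℝ, StrictMono b ∧ ∀ i, deriv g (b i) = 0 := by
  have H : ∀ i : Fin k, ∃ x, x ∈ Set.Ioo (a i.castSucc) (a i.succ) ∧ deriv g x = 0 := by
    intro i
    have hlt : a i.castSucc < a i.succ := ha (Fin.castSucc_lt_succ (i := i))
    obtain ⟨x, hx, hx0⟩ := exists_deriv_eq_zero hlt (hg.continuous.continuousOn)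
      ((h0 _).trans (h0 _).symm)
    exact ⟨x, hx, hx0⟩
  choose b hb hb0 using H
  refine ⟨b, ?_, hb0⟩
  intro i j hij
  have h1 : b i < a i.succ := (hb i).2
  have h2 : a j.castSucc < b j := (hb j).1
  have h3 : a i.succ ≤ a j.castSucc := ha.monotone (by
    rwa [Fin.succ_le_castSucc_iff])
  linarith

/-- Distinct roots of a nonzero polynomial are at most its natDegree. -/
lemma distinct_roots_le {h : ℝ[X]} (hh : h ≠ 0) {k : ℕ} {a : Fin k → ℝ}
    (hinj : Function.Injective a) (h0 : ∀ i, h.eval (a i) = 0) : k ≤ h.natDegree := by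
  have hsub : Finset.image a Finset.univ ⊆ h.roots.toFinset := by
    intro x hx
    simp only [Finset.mem_image] at hx
    obtain ⟨i, _, rfl⟩ := hx
    rw [Multiset.mem_toFinset, mem_roots hh]
    exact h0 i
  calc k = (Finset.image a Finset.univ).card := by
            rw [Finset.card_image_of_injective _ hinj, Finset.card_univ, Fintype.card_fin]
    _ ≤ h.roots.toFinset.card := Finset.card_le_card hsub
    _ ≤ Multiset.card h.roots := Multiset.toFinset_card_le _
    _ ≤ h.natDegree := h.card_roots'


lemma deriv_polyexp (r s : ℝ[X]) (c : ℝ) :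
    ∀ x : ℝ, HasDerivAt (fun x => r.eval x + s.eval x * Real.exp (c * x))
      (r.derivative.eval x + (derivative s + c • s).eval x * Real.exp (c * x)) x := by
  intro x
  have he : HasDerivAt (fun x : ℝ => Real.exp (c * x)) (Real.exp (c * x) * c) x := by
    simpa using ((hasDerivAt_id' x).const_mul c).exp
  have := (r.hasDerivAt x).add ((s.hasDerivAt x).mul he)
  refine this.congr_deriv ?_
  rw [eval_add, eval_smul, smul_eq_mul]
  ring

lemma s2_ne_zero {s : ℝ[X]} (hs : s ≠ 0) {c : ℝ} (hc : c ≠ 0) :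
    (derivative s + c • s).coeff s.natDegree = c * s.leadingCoeff ∧
      (derivative s + c • s).natDegree = s.natDegree := by
  have hco : (derivative s + c • s).coeff s.natDegree = c * s.leadingCoeff := by
    rw [coeff_add, coeff_smul, coeff_derivative, coeff_natDegree_succ_eq_zero,
      smul_eq_mul, leadingCoeff]
    ring
  refine ⟨hco, ?_⟩
  have hle : (derivative s + c • s).natDegree ≤ s.natDegree :=
    (natDegree_add_le _ _).trans (by
      simp only [sup_le_iff]  -- max
      constructor
      · exact (natDegree_derivative_le s).trans (Nat.sub_le _ _)
      · exact natDegree_smul_le _ _)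
  have hne : (derivative s + c • s).coeff s.natDegree ≠ 0 := by
    rw [hco]; exact mul_ne_zero hc (leadingCoeff_ne_zero.mpr hs)
  exact le_antisymm hle (le_natDegree_of_ne_zero hne)

/-- Zero-count for `r + s·exp(c·)`. -/
lemma zero_count (c : ℝ) (hc : 0 < c) :
    ∀ (n : ℕ) (r s : ℝ[X]), r.natDegree ≤ n → (r ≠ 0 ∨ s ≠ 0) →
      ∀ (k : ℕ) (a : Fin k → ℝ), StrictMono a →
        (∀ i, r.eval (a i) + s.eval (a i) * Real.exp (c * a i) = 0) →
        k ≤ n + s.natDegree + 1 := by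
  intro n
  induction n with
  | zero =>
    intro r s hrd hne k a ha h0
    by_cases hs : s = 0
    · rcases hne with hr | hs'
      · subst hs
        have h0' : ∀ i, r.eval (a i) = 0 := by
          intro i; have := h0 i; simpa using this
        have := distinct_roots_le hr ha.injective h0'
        omega
      · exact (hs' hs).elim
    · -- s ≠ 0
      match k with
      | 0 => omega
      | k' + 1 =>
        set g := fun x => r.eval x + s.eval x * Real.exp (c * x) with hgdef
        have hder := deriv_polyexp r s c
        have hdiff : Differentiable ℝ g := fun x => (hder x).differentiableAt
        obtain ⟨b, hb, hb0⟩ := rolle_step hdiff a ha h0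
        -- r is constant (natDegree 0), so derivative r = 0
        have hr0 : derivative r = 0 := by
          have : r = C (r.coeff 0) := Polynomial.eq_C_of_natDegree_le_zero hrd
          rw [this, derivative_C]
        have hs2 := s2_ne_zero hs (ne_of_gt hc)
        have hs2ne : derivative s + c • s ≠ 0 := by
          intro h
          have := hs2.1
          rw [h, coeff_zero] at this
          exact (mul_ne_zero (ne_of_gt hc) (leadingCoeff_ne_zero.mpr hs)) this.symm
        have hzb : ∀ i, (derivative s + c • s).eval (b i) = 0 := by
          intro i
          have h1 : deriv g (b i) = 0 := hb0 i
          have h2 := (hder (b i)).deriv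
          rw [h1, hr0] at h2
          simp only [eval_zero, zero_add] at h2
          have := (Real.exp_pos (c * b i)).ne'
          field_simp at h2
          rw [eval_add, eval_smul, smul_eq_mul]
          rw [eval_add, eval_smul, smul_eq_mul] at h2
          exact (mul_eq_zero.mp h2.symm).resolve_right this
        have := distinct_roots_le hs2ne hb.injective hzb
        rw [hs2.2] at this
        omega
  | succ n' IH =>
    intro r s hrd hne k a ha h0
    by_cases hs : s = 0
    · rcases hne with hr | hs'
      · subst hs
        have h0' : ∀ i, r.eval (a i) = 0 := by
          intro i; have := h0 i; simpa using this
        have := distinct_roots_le hr ha.injective h0'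
        omega
      · exact (hs' hs).elim
    · match k with
      | 0 => omega
      | k' + 1 =>
        set g := fun x => r.eval x + s.eval x * Real.exp (c * x) with hgdef
        have hder := deriv_polyexp r s c
        have hdiff : Differentiable ℝ g := fun x => (hder x).differentiableAt
        obtain ⟨b, hb, hb0⟩ := rolle_step hdiff a ha h0
        have hs2 := s2_ne_zero hs (ne_of_gt hc)
        have hs2ne : derivative s + c • s ≠ 0 := by
          intro h
          have := hs2.1
          rw [h, coeff_zero] at this
          exact (mul_ne_zero (ne_of_gt hc) (leadingCoeff_ne_zero.mpr hs)) this.symm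
        have hzb : ∀ i, (derivative r).eval (b i) +
            (derivative s + c • s).eval (b i) * Real.exp (c * b i) = 0 := by
          intro i
          have h2 := (hder (b i)).deriv
          rw [hb0 i] at h2
          exact h2.symm
        have hrd' : (derivative r).natDegree ≤ n' := by
          have := natDegree_derivative_le r
          omega
        have := IH (derivative r) (derivative s + c • s) hrd' (Or.inr hs2ne) k' b hb hzb
        rw [hs2.2] at this
        omega

noncomputable def PpX (p : ℕ) (c : ℝ) : ℝ[X] :=
  ∑ j ∈ Finset.range (p + 1),
    C (((p.factorial : ℝ) / ((2 * p).factorial : ℝ)) *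
        (((p + j).factorial : ℝ) / ((j.factorial : ℝ) * ((p - j).factorial : ℝ))) *
        (2 * c) ^ (p - j)) * X ^ (p - j)

lemma PpX_eval (p : ℕ) (c u : ℝ) : (PpX p c).eval u = maternPoly p c u := by
  rw [PpX, maternPoly, eval_finset_sum, Finset.mul_sum]
  refine Finset.sum_congr rfl fun j hj => ?_
  rw [eval_mul, eval_C, eval_pow, eval_X, mul_pow]
  ring

lemma PpX_natDegree_le (p : ℕ) (c : ℝ) : (PpX p c).natDegree ≤ p := by
  refine natDegree_sum_le_of_forall_le _ _ fun j hj => ?_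
  exact (natDegree_C_mul_le _ _).trans ((natDegree_X_pow _).le.trans (Nat.sub_le _ _))

lemma PpX_coeff_p (p : ℕ) (c : ℝ) (hc : 0 < c) : (PpX p c).coeff p ≠ 0 := by
  have : (PpX p c).coeff p =
      ((p.factorial : ℝ) / ((2 * p).factorial : ℝ)) *
        (((p + 0).factorial : ℝ) / ((Nat.factorial 0 : ℝ) * ((p - 0).factorial : ℝ))) *
        (2 * c) ^ (p - 0) := by
    rw [PpX, finset_sum_coeff]
    rw [Finset.sum_eq_single 0]
    · rw [coeff_C_mul, coeff_X_pow, if_pos (by simp)]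
      ring
    · intro j hj hjne
      rw [coeff_C_mul, coeff_X_pow, if_neg, mul_zero]
      rw [Finset.mem_range] at hj
      omega
    · simp
  rw [this]
  have h1 : (0:ℝ) < (p.factorial : ℝ) / ((2 * p).factorial : ℝ) :=
    div_pos (by positivity) (by positivity)
  positivity


lemma moment_extraction {m : ℕ} (B : Fin m → ℝ) (a : Fin m → ℝ) (p : ℕ) (r : ℝ[X])
    (hrd : r.natDegree ≤ p) (hrc : r.coeff p ≠ 0) (M : ℝ)
    (hF : ∀ x : ℝ, M ≤ x → ∑ j, B j * r.eval (x - a j) = 0) :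
    ∀ q : ℝ[X], q.natDegree ≤ p → ∑ j, B j * q.eval (a j) = 0 := by
  -- the polynomial identity
  set Fp : ℝ[X] := ∑ j, C (B j) * (r.comp (X - C (a j))) with hFp
  have hFeval : ∀ x : ℝ, Fp.eval x = ∑ j, B j * r.eval (x - a j) := by
    intro x
    rw [hFp, eval_finset_sum]
    refine Finset.sum_congr rfl fun j _ => ?_
    rw [eval_mul, eval_C, eval_comp, eval_sub, eval_X, eval_C]
  have hFp0 : Fp = 0 := by
    apply Polynomial.eq_zero_of_infinite_isRoot
    refine (Set.Ici_infinite M).mono fun x hx => ?_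
    simp only [Set.mem_setOf_eq, IsRoot.def]
    rw [hFeval]
    exact hF x hx
  -- coefficient conditions
  have hcoeff : ∀ k : ℕ, ∑ j, B j * (hasseDeriv k r).eval (-(a j)) = 0 := by
    intro k
    have h1 : Fp.coeff k = 0 := by rw [hFp0, coeff_zero]
    rw [hFp, finset_sum_coeff] at h1
    rw [← h1]
    refine Finset.sum_congr rfl fun j _ => ?_
    rw [coeff_C_mul]
    congr 1
    have : X - C (a j) = X + C (-(a j)) := by rw [C_neg, sub_eq_add_neg]
    rw [this, ← taylor_apply, taylor_coeff]
  -- triangular induction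
  have key : ∀ n, ∀ q : ℝ[X], q.natDegree ≤ n → n ≤ p →
      ∑ j, B j * q.eval (-(a j)) = 0 := by
    intro n
    induction n using Nat.strong_induction_on with
    | _ n IH =>
      intro q hq hnp
      set G := hasseDeriv (p - n) r with hG
      have hGd : G.natDegree ≤ n := by
        have h1 : G.natDegree ≤ r.natDegree - (p - n) := natDegree_hasseDeriv_le r (p - n)
        omega
      have hGc : G.coeff n ≠ 0 := by
        rw [hG, hasseDeriv_coeff]
        have hnn : n + (p - n) = p := by omega
        rw [hnn]
        exact mul_ne_zero (Nat.cast_ne_zero.mpr (Nat.choose_pos (Nat.sub_le p n)).ne') hrc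
      set lam := q.coeff n / G.coeff n with hlam
      set q' := q - lam • G with hq'
      have hsplit : q = q' + lam • G := by rw [hq']; ring
      have hq'c : q'.coeff n = 0 := by
        rw [hq', coeff_sub, coeff_smul, smul_eq_mul, hlam]
        field_simp
        ring
      have hq'd : q'.natDegree ≤ n := by
        rw [hq']
        refine (natDegree_sub_le _ _).trans ?_
        simp only [max_le_iff]
        exact ⟨hq, (natDegree_smul_le _ _).trans hGd⟩
      have hTq' : ∑ j, B j * q'.eval (-(a j)) = 0 := by
        rcases eq_or_ne q' 0 with h | h
        · simp [h]
        · have hlt : q'.natDegree < n := by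
            rcases Nat.lt_or_ge q'.natDegree n with h' | h'
            · exact h'
            · exfalso
              have he : q'.natDegree = n := le_antisymm hq'd h'
              have := leadingCoeff_ne_zero.mpr h
              rw [leadingCoeff, he] at this
              exact this hq'c
          exact IH _ hlt q' le_rfl (le_trans hlt.le hnp)
      have hTG : ∑ j, B j * G.eval (-(a j)) = 0 := hcoeff (p - n)
      calc ∑ j, B j * q.eval (-(a j))
          = (∑ j, B j * q'.eval (-(a j))) + lam * ∑ j, B j * G.eval (-(a j)) := by
            rw [hsplit]
            rw [Finset.mul_sum, ← Finset.sum_add_distrib]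
            refine Finset.sum_congr rfl fun j _ => ?_
            rw [eval_add, eval_smul, smul_eq_mul]
            ring
        _ = 0 := by rw [hTq', hTG]; ring
  -- conclude
  intro q hqd
  have hcomp : (q.comp (-X)).natDegree ≤ p := by
    rw [natDegree_comp, natDegree_neg, natDegree_X, mul_one]
    exact hqd
  have := key p (q.comp (-X)) hcomp le_rfl
  rw [← this]
  refine Finset.sum_congr rfl fun j _ => ?_
  rw [eval_comp, eval_neg, eval_X, neg_neg]

/-- For the half-integer Matérn kernel with smoothness `ν = p + 1/2`
(`c > 0`), there is no kernel packet of degree `m < 2ν + 2 = 2p + 3`: if `a_1, …, a_m` are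
distinct and `φ(x) = ∑_j A_j K(x, a_j)` has compact support, then all `A_j = 0`. -/
theorem no_kernel_packet_of_low_degree
    (p : ℕ) (c : ℝ) (hc : 0 < c)
    (m : ℕ) (hm : 0 < m) (hmk : m < 2 * p + 3)
    (a : Fin m → ℝ) (ha : Function.Injective a)
    (A : Fin m → ℝ)
    (φ : ℝ → ℝ) (hφ : ∀ x, φ x = ∑ j, A j * maternKernel p c x (a j))
    (hsupp : HasCompactSupport φ) :
    ∀ j, A j = 0 := by
  haveI : Nonempty (Fin m) := ⟨⟨0, hm⟩⟩
  -- tail vanishing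
  obtain ⟨R, hR⟩ : ∃ R : ℝ, ∀ x, R ≤ |x| → φ x = 0 := by
    obtain ⟨R, hR⟩ := (hsupp.isBounded).subset_closedBall 0
    refine ⟨R + 1, fun x hx => ?_⟩
    apply image_eq_zero_of_notMem_tsupport
    intro hmem
    have := hR hmem
    simp only [Metric.mem_closedBall, Real.dist_eq, sub_zero] at this
    linarith
  set S : ℝ := Finset.univ.sup' Finset.univ_nonempty (fun j => |a j|) with hS
  have hSa : ∀ j, |a j| ≤ S := fun j => by rw [hS]; exact Finset.le_sup' (fun j => |a j|) (Finset.mem_univ j)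
  have hS0 : 0 ≤ S := le_trans (abs_nonneg _) (hSa (Classical.arbitrary _))
  set M0 : ℝ := max R (S + 1) with hM0
  -- right tail
  have hplus : ∀ x : ℝ, M0 ≤ x →
      ∑ j, (A j * Real.exp (c * a j)) * (PpX p c).eval (x - a j) = 0 := by
    intro x hx
    have hxS : S + 1 ≤ x := le_trans (le_max_right _ _) hx
    have hxpos : 0 < x := by linarith
    have hφ0 : φ x = 0 := hR x (by rw [abs_of_pos hxpos]; exact le_trans (le_max_left _ _) hx)
    rw [hφ] at hφ0
    have key : ∑ j, (A j * Real.exp (c * a j)) * (PpX p c).eval (x - a j)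
        = Real.exp (c * x) * ∑ j, A j * maternKernel p c x (a j) := by
      rw [Finset.mul_sum]
      refine Finset.sum_congr rfl fun j _ => ?_
      have haj : a j ≤ S := le_trans (le_abs_self _) (hSa j)
      have habs : |x - a j| = x - a j := abs_of_pos (by linarith)
      rw [maternKernel, habs, PpX_eval]
      have he : Real.exp (c * a j) = Real.exp (c * x) * Real.exp (-(c * (x - a j))) := by
        rw [← Real.exp_add]; congr 1; ring
      rw [he]; ring
    rw [key, hφ0, mul_zero]
  -- left tail
  have hminus : ∀ y : ℝ, M0 ≤ y →
      ∑ j, (A j * Real.exp (-(c * a j))) * (PpX p c).eval (y - (-(a j))) = 0 := by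
    intro y hy
    have hyS : S + 1 ≤ y := le_trans (le_max_right _ _) hy
    have hypos : 0 < y := by linarith
    have hφ0 : φ (-y) = 0 := hR (-y) (by rw [abs_neg, abs_of_pos hypos]; exact le_trans (le_max_left _ _) hy)
    rw [hφ] at hφ0
    have key : ∑ j, (A j * Real.exp (-(c * a j))) * (PpX p c).eval (y - (-(a j)))
        = Real.exp (c * y) * ∑ j, A j * maternKernel p c (-y) (a j) := by
      rw [Finset.mul_sum]
      refine Finset.sum_congr rfl fun j _ => ?_
      have haj : -S ≤ a j := neg_le_of_abs_le (hSa j)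
      have habs : |(-y) - a j| = y + a j := by
        rw [abs_of_nonpos (by linarith)]; ring
      rw [maternKernel, habs, PpX_eval]
      have hyy : y - (-(a j)) = y + a j := by ring
      rw [hyy]
      have he : Real.exp (-(c * a j)) = Real.exp (c * y) * Real.exp (-(c * (y + a j))) := by
        rw [← Real.exp_add]; congr 1; ring
      rw [he]; ring
    rw [key, hφ0, mul_zero]
  -- moment conditions
  have hB : ∀ q : ℝ[X], q.natDegree ≤ p →
      ∑ j, (A j * Real.exp (c * a j)) * q.eval (a j) = 0 :=
    moment_extraction _ a p (PpX p c) (PpX_natDegree_le p c) (PpX_coeff_p p c hc) M0 hplus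
  have hCneg : ∀ q : ℝ[X], q.natDegree ≤ p →
      ∑ j, (A j * Real.exp (-(c * a j))) * q.eval (-(a j)) = 0 :=
    moment_extraction _ (fun j => -(a j)) p (PpX p c) (PpX_natDegree_le p c)
      (PpX_coeff_p p c hc) M0 hminus
  have hC : ∀ q : ℝ[X], q.natDegree ≤ p →
      ∑ j, (A j * Real.exp (-(c * a j))) * q.eval (a j) = 0 := by
    intro q hq
    have hcomp : (q.comp (-X)).natDegree ≤ p := by
      rw [natDegree_comp, natDegree_neg, natDegree_X, mul_one]; exact hq
    have := hCneg (q.comp (-X)) hcomp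
    rw [← this]
    refine Finset.sum_congr rfl fun j _ => ?_
    rw [eval_comp, eval_neg, eval_X, neg_neg]
  -- main argument
  intro j0
  -- build the finset of interpolation nodes
  haveI hinf : Infinite {x : ℝ // x ≠ a j0} := by
    refine Infinite.of_injective (fun n : ℕ => (⟨a j0 + n + 1, by
      have : (0:ℝ) < (n:ℝ) + 1 := by positivity
      intro h; linarith [h.le]⟩ : {x : ℝ // x ≠ a j0})) ?_
    intro n1 n2 h
    have h2 : a j0 + (n1:ℝ) + 1 = a j0 + (n2:ℝ) + 1 := congrArg Subtype.val h
    have : (n1:ℝ) = (n2:ℝ) := by linarith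
    exact_mod_cast this
  -- interpolation nodes
  set F₀ : Finset ℝ := (Finset.univ.image a).erase (a j0) with hF₀
  have hcard₀ : F₀.card = m - 1 := by
    rw [hF₀, Finset.card_erase_of_mem (Finset.mem_image_of_mem a (Finset.mem_univ j0)),
      Finset.card_image_of_injective _ ha, Finset.card_univ, Fintype.card_fin]
  have hF₀ne : ∀ x ∈ F₀, x ≠ a j0 := fun x hx => (Finset.mem_erase.mp hx).1
  set emb : {x : ℝ // x ≠ a j0} ↪ ℝ := Function.Embedding.subtype _ with hemb
  have hembF : ∀ x : {x // x ∈ F₀}, (x : ℝ) ≠ a j0 := fun x => hF₀ne x.1 x.2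
  set F₀' : Finset {x : ℝ // x ≠ a j0} :=
    F₀.attach.map ⟨fun x : {x // x ∈ F₀} => (⟨(x : ℝ), hembF x⟩ : {x : ℝ // x ≠ a j0}),
      fun x y hxy => Subtype.ext (congrArg (Subtype.val : {t : ℝ // t ≠ a j0} → ℝ) hxy)⟩ with hF₀'
  have hcard₀' : F₀'.card = m - 1 := by
    rw [hF₀', Finset.card_map, Finset.card_attach, hcard₀]
  obtain ⟨T, hTsub, hTcard⟩ := Infinite.exists_superset_card_eq F₀' (2*p+1) (by omega)
  set F : Finset ℝ := T.map emb with hF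
  have hFcard : F.card = 2*p+1 := by rw [hF, Finset.card_map, hTcard]
  have hFne : a j0 ∉ F := by
    rw [hF]
    intro hmem
    obtain ⟨x, _, hxe⟩ := Finset.mem_map.mp hmem
    exact x.2 hxe
  have hF₀F : ∀ x ∈ F₀, x ∈ F := by
    intro x hx
    rw [hF]
    refine Finset.mem_map.mpr ⟨⟨x, hF₀ne x hx⟩, hTsub ?_, rfl⟩
    rw [hF₀']
    exact Finset.mem_map.mpr ⟨⟨x, hx⟩, Finset.mem_attach _ _, rfl⟩
  -- linear algebra: find a nonzero pair (r, s) vanishing on F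
  set Φ : (degreeLT ℝ (p+1) × degreeLT ℝ (p+1)) →ₗ[ℝ] (↥F → ℝ) :=
    LinearMap.pi (fun z : ↥F =>
      Real.exp (c * (z:ℝ)) • ((leval (z:ℝ)).comp
        ((degreeLT ℝ (p+1)).subtype.comp (LinearMap.fst ℝ _ _)))
      + Real.exp (-(c * (z:ℝ))) • ((leval (z:ℝ)).comp
        ((degreeLT ℝ (p+1)).subtype.comp (LinearMap.snd ℝ _ _)))) with hΦ
  haveI hfin : Module.Finite ℝ (degreeLT ℝ (p+1) : Submodule ℝ ℝ[X]) :=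
    Module.Finite.equiv (Polynomial.degreeLTEquiv ℝ (p+1)).symm
  haveI hfree : Module.Free ℝ (degreeLT ℝ (p+1) : Submodule ℝ ℝ[X]) :=
    Module.Free.of_equiv (Polynomial.degreeLTEquiv ℝ (p+1)).symm
  have hker : ∃ w, w ∈ LinearMap.ker Φ ∧ w ≠ 0 := by
    by_contra hcon
    push_neg at hcon
    have hinj : Function.Injective Φ := by
      rw [← LinearMap.ker_eq_bot, Submodule.eq_bot_iff]
      exact fun w hw => hcon w hw
    have hle := LinearMap.finrank_le_finrank_of_injective hinj
    rw [Module.finrank_prod] at hle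
    have h1 : Module.finrank ℝ (degreeLT ℝ (p+1)) = p + 1 := by
      rw [(Polynomial.degreeLTEquiv ℝ (p+1)).finrank_eq, Module.finrank_fin_fun]
    have h2 : Module.finrank ℝ (↥F → ℝ) = 2*p+1 := by
      rw [Module.finrank_fintype_fun_eq_card, Fintype.card_coe, hFcard]
    rw [h1, h2] at hle
    omega
  obtain ⟨w, hwk, hwne⟩ := hker
  set r : ℝ[X] := (w.1 : ℝ[X]) with hrdef
  set s : ℝ[X] := (w.2 : ℝ[X]) with hsdef
  have hdegLT : ∀ q : ℝ[X], q ∈ degreeLT ℝ (p+1) → q.natDegree ≤ p := by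
    intro q hq
    rw [Polynomial.mem_degreeLT] at hq
    rcases eq_or_ne q 0 with rfl | hq0
    · simp
    · exact Nat.lt_succ_iff.mp ((natDegree_lt_iff_degree_lt hq0).mpr (by exact_mod_cast hq))
  have hrd : r.natDegree ≤ p := hdegLT _ w.1.2
  have hsd : s.natDegree ≤ p := hdegLT _ w.2.2
  have hrs : r ≠ 0 ∨ s ≠ 0 := by
    by_contra hcon
    push_neg at hcon
    apply hwne
    have h1 : w.1 = 0 := Subtype.ext hcon.1
    have h2 : w.2 = 0 := Subtype.ext hcon.2
    exact Prod.ext h1 h2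
  set g : ℝ → ℝ := fun x => r.eval x * Real.exp (c * x) + s.eval x * Real.exp (-(c * x))
    with hg
  have hgF : ∀ z ∈ F, g z = 0 := by
    intro z hz
    have hw0 : Φ w = 0 := LinearMap.mem_ker.mp hwk
    have h2 := congrFun hw0 (⟨z, hz⟩ : ↥F)
    simp only [hΦ, LinearMap.pi_apply, LinearMap.add_apply, LinearMap.smul_apply,
      LinearMap.comp_apply, LinearMap.fst_apply, LinearMap.snd_apply,
      Submodule.coe_subtype, leval_apply, smul_eq_mul, Pi.zero_apply] at h2
    rw [hg]
    simp only []
    linear_combination h2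
  have hgj0 : g (a j0) ≠ 0 := by
    intro h0
    set G : Finset ℝ := insert (a j0) F with hG
    have hGcard : G.card = 2*p+2 := by
      rw [hG, Finset.card_insert_of_notMem hFne, hFcard]
    set e := G.orderEmbOfFin hGcard with he
    have hzeros : ∀ i : Fin (2*p+2),
        s.eval (e i) + r.eval (e i) * Real.exp ((2*c) * (e i)) = 0 := by
      intro i
      have hmem : e i ∈ insert (a j0) F := Finset.orderEmbOfFin_mem G hGcard i
      have hgz : g (e i) = 0 := by
        rcases Finset.mem_insert.mp hmem with h | h
        · rw [h]; exact h0
        · exact hgF _ h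
      rw [hg] at hgz
      simp only [] at hgz
      set z : ℝ := e i
      have he1 : Real.exp (c*z) * Real.exp (c*z) = Real.exp ((2*c)*z) := by
        rw [← Real.exp_add]; congr 1; ring
      have he2 : Real.exp (c*z) * Real.exp (-(c*z)) = 1 := by
        rw [← Real.exp_add]; simp
      linear_combination Real.exp (c*z) * hgz - r.eval z * he1 - s.eval z * he2
    have hbound := zero_count (2*c) (by linarith) p s r hsd hrs.symm (2*p+2)
      (fun i => e i) (G.orderEmbOfFin hGcard).strictMono hzeros
    omega
  -- conclude
  have hsum : ∑ j, A j * g (a j) = 0 := by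
    have h1 := hB r hrd
    have h2 := hC s hsd
    calc ∑ j, A j * g (a j)
        = (∑ j, (A j * Real.exp (c * a j)) * r.eval (a j))
          + ∑ j, (A j * Real.exp (-(c * a j))) * s.eval (a j) := by
          rw [← Finset.sum_add_distrib]
          refine Finset.sum_congr rfl fun j _ => ?_
          rw [hg]; ring
      _ = 0 := by rw [h1, h2]; ring
  have hsingle : ∑ j, A j * g (a j) = A j0 * g (a j0) := by
    apply Finset.sum_eq_single j0
    · intro j _ hj
      have hmemF : a j ∈ F := hF₀F _ (by
        rw [hF₀]
        exact Finset.mem_erase.mpr ⟨fun h => hj (ha h),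
          Finset.mem_image_of_mem a (Finset.mem_univ j)⟩)
      rw [hgF _ hmemF, mul_zero]
    · intro h
      exact absurd (Finset.mem_univ j0) h
  rw [hsingle] at hsum
  rcases mul_eq_zero.mp hsum with h | h
  · exact h
  · exact absurd h hgj0
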